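/- Define the zero generalized Pascal matrix entry Z_q(n,m) for a fixed integer q ≥ 2 by: Z_q(n,m) = 1 if for every k ≥ 1 one has n mod q^k ≥ m mod q^k, and Z_q(n,m) = 0 otherwise. Then for all k ≥ 1, n, m ≥ 0, and 0 ≤ i, j < q^k: Z_q(q^k·n + i, q^k·m + j) = Z_q(n,m) · Z_q(i,j). -/

import Mathlib

open Classical in
/-- Zero generalized Pascal matrix entry: `1` if `n mod q^k ≥ m mod q^k` for all `k ≥ 1`,
`0` otherwise. -/
noncomputable def Z (q n m : ℕ) : ℕ :=
  if ∀ k ≥ 1, m % q ^ k ≤ n % q ^ k then 1 else 0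

lemma Zkey (q : ℕ) (hq : 2 ≤ q) (k t n i : ℕ) (hi : i < q ^ k) :
    (q ^ k * n + i) % q ^ (k + t) = q ^ k * (n % q ^ t) + i := by
  have hq0 : 0 < q := by omega
  have hqt : 0 < q ^ t := pow_pos hq0 t
  have hdm := Nat.div_add_mod n (q ^ t)
  have hsplit : q ^ k * n + i
      = (q ^ k * (n % q ^ t) + i) + q ^ (k + t) * (n / q ^ t) := by
    rw [pow_add]
    nlinarith [hdm]
  rw [hsplit, Nat.add_mul_mod_self_left, Nat.mod_eq_of_lt]
  have h1 : n % q ^ t + 1 ≤ q ^ t := Nat.mod_lt n hqt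
  calc q ^ k * (n % q ^ t) + i < q ^ k * (n % q ^ t) + q ^ k := by omega
    _ = q ^ k * (n % q ^ t + 1) := by ring
    _ ≤ q ^ k * q ^ t := Nat.mul_le_mul_left _ h1
    _ = q ^ (k + t) := (pow_add q k t).symm

lemma Zsmall (q k l n i : ℕ) (hl : l ≤ k) :
    (q ^ k * n + i) % q ^ l = i % q ^ l := by
  obtain ⟨c, hc⟩ := pow_dvd_pow q hl
  rw [hc, mul_assoc, Nat.mul_add_mod]

theorem stmt7 (q : ℕ) (hq : 2 ≤ q) (k n m i j : ℕ) (hk : 1 ≤ k)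
    (hi : i < q ^ k) (hj : j < q ^ k) :
    Z q (q ^ k * n + i) (q ^ k * m + j) = Z q n m * Z q i j := by
  have hq0 : 0 < q := by omega
  have hqk : 0 < q ^ k := pow_pos hq0 k
  have hiff : (∀ l ≥ 1, (q ^ k * m + j) % q ^ l ≤ (q ^ k * n + i) % q ^ l) ↔
      ((∀ l ≥ 1, m % q ^ l ≤ n % q ^ l) ∧ (∀ l ≥ 1, j % q ^ l ≤ i % q ^ l)) := by
    constructor
    · intro h
      have hji : j ≤ i := by
        have := h k hk
        rwa [Zsmall q k k n i le_rfl, Zsmall q k k m j le_rfl,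
          Nat.mod_eq_of_lt hi, Nat.mod_eq_of_lt hj] at this
      constructor
      · intro l hl
        have h2 := h (k + l) (by omega)
        rw [Zkey q hq k l n i hi, Zkey q hq k l m j hj] at h2
        by_contra hcon
        push_neg at hcon
        have : q ^ k * (n % q ^ l + 1) ≤ q ^ k * (m % q ^ l) :=
          Nat.mul_le_mul_left _ hcon
        nlinarith
      · intro l hl
        rcases le_or_gt l k with hlk | hlk
        · have := h l hl
          rwa [Zsmall q k l n i hlk, Zsmall q k l m j hlk] at this
        · have hqkl : q ^ k ≤ q ^ l := Nat.pow_le_pow_right hq0 (le_of_lt hlk)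
          rw [Nat.mod_eq_of_lt (lt_of_lt_of_le hi hqkl),
            Nat.mod_eq_of_lt (lt_of_lt_of_le hj hqkl)]
          exact hji
    · rintro ⟨hB, hC⟩ l hl
      have hji : j ≤ i := by
        have := hC k hk
        rwa [Nat.mod_eq_of_lt hi, Nat.mod_eq_of_lt hj] at this
      rcases le_or_gt l k with hlk | hlk
      · rw [Zsmall q k l n i hlk, Zsmall q k l m j hlk]
        exact hC l hl
      · obtain ⟨t, rfl⟩ := Nat.exists_eq_add_of_le (le_of_lt hlk)
        have ht : 1 ≤ t := by omega
        rw [Zkey q hq k t n i hi, Zkey q hq k t m j hj]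
        exact Nat.add_le_add (Nat.mul_le_mul_left _ (hB t ht)) hji
  simp only [Z]
  by_cases h1 : ∀ l ≥ 1, m % q ^ l ≤ n % q ^ l <;>
    by_cases h2 : ∀ l ≥ 1, j % q ^ l ≤ i % q ^ l
  · rw [if_pos (hiff.mpr ⟨h1, h2⟩), if_pos h1, if_pos h2]
  · rw [if_neg (fun hA => h2 (hiff.mp hA).2), if_pos h1, if_neg h2]
  · rw [if_neg (fun hA => h1 (hiff.mp hA).1), if_neg h1, Nat.zero_mul]
  · rw [if_neg (fun hA => h1 (hiff.mp hA).1), if_neg h1, Nat.zero_mul]
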